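/- Let (a_k) and (b_k) be nondecreasing unbounded sequences of positive reals with a_k ≤ b_k for all k. Then there exists a sequence (v_k) of positive integers with v_k dividing v_{k+1} for every k, such that 1 ≤ limsup_{k→∞} a_k / v_k ≤ 2 and 1 ≤ liminf_{k→∞} b_k / v_k ≤ 2. -/

import Mathlib

open Filter
open scoped ENNReal

/-- largest power-of-2 multiple of `V` not exceeding `x`. -/
noncomputable def bdiv (V : ℕ) (x : ℝ) : ℕ := V * 2 ^ Nat.log 2 ⌊x / V⌋₊

lemma bdiv_spec {V : ℕ} {x : ℝ} (hV : 0 < V) (hx : (V : ℝ) ≤ x) :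
    (bdiv V x : ℝ) ≤ x ∧ x < 2 * bdiv V x := by
  have hV' : (0:ℝ) < V := by exact_mod_cast hV
  have h1 : (1:ℝ) ≤ x / V := (one_le_div hV').2 hx
  have h0 : (0:ℝ) ≤ x / V := by linarith
  set n := ⌊x / V⌋₊ with hn
  have hn1 : 1 ≤ n := Nat.le_floor (by exact_mod_cast h1)
  have hlow : (2 ^ Nat.log 2 n : ℝ) ≤ x / V := by
    calc (2 ^ Nat.log 2 n : ℝ) ≤ (n : ℝ) := by
          exact_mod_cast Nat.pow_log_le_self 2 (by omega)
      _ ≤ x / V := Nat.floor_le h0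
  have hhigh : x / V < 2 * 2 ^ Nat.log 2 n := by
    have h2 : x / V < n + 1 := Nat.lt_floor_add_one _
    have h3 : n + 1 ≤ 2 ^ (Nat.log 2 n + 1) := Nat.lt_pow_succ_log_self (by norm_num) n
    have h3' : ((n:ℝ) + 1) ≤ 2 ^ (Nat.log 2 n + 1) := by exact_mod_cast h3
    calc x / V < (n:ℝ) + 1 := h2
      _ ≤ 2 ^ (Nat.log 2 n + 1) := h3'
      _ = 2 * 2 ^ Nat.log 2 n := by ring
  constructor
  · have : (bdiv V x : ℝ) = V * 2 ^ Nat.log 2 n := by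
      simp [bdiv, hn]
    rw [this]
    calc (V:ℝ) * 2 ^ Nat.log 2 n ≤ V * (x / V) := by
          exact mul_le_mul_of_nonneg_left hlow (le_of_lt hV')
      _ = x := by field_simp
  · have : (bdiv V x : ℝ) = V * 2 ^ Nat.log 2 n := by
      simp [bdiv, hn]
    rw [this]
    have := (div_lt_iff₀ hV').1 hhigh
    nlinarith

lemma bdiv_dvd (V : ℕ) (x : ℝ) : V ∣ bdiv V x := ⟨_, rfl⟩

lemma bdiv_pos {V : ℕ} (hV : 0 < V) (x : ℝ) : 0 < bdiv V x :=
  Nat.mul_pos hV (Nat.pow_pos (by norm_num))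

open Classical in
noncomputable def stmt2st (a b : ℕ → ℝ) : ℕ → ℕ × Bool
  | 0 => if 1 ≤ a 0 then (bdiv 1 (a 0), true) else (1, false)
  | k + 1 =>
    let p := stmt2st a b k
    if p.2 then (bdiv p.1 (b (k+1)), false)
    else if (p.1 : ℝ) ≤ a (k+1) then (bdiv p.1 (a (k+1)), true)
    else (p.1, false)

theorem stmt2 (a b : ℕ → ℝ) (hapos : ∀ k, 0 < a k) (hbpos : ∀ k, 0 < b k)
    (hamono : Monotone a) (hbmono : Monotone b)
    (haunb : Tendsto a atTop atTop) (hbunb : Tendsto b atTop atTop)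
    (hab : ∀ k, a k ≤ b k) :
    ∃ v : ℕ → ℕ, (∀ k, 0 < v k) ∧ (∀ k, v k ∣ v (k + 1)) ∧
      1 ≤ Filter.limsup (fun k => ENNReal.ofReal (a k / (v k : ℝ))) atTop ∧
      Filter.limsup (fun k => ENNReal.ofReal (a k / (v k : ℝ))) atTop ≤ 2 ∧
      1 ≤ Filter.liminf (fun k => ENNReal.ofReal (b k / (v k : ℝ))) atTop ∧
      Filter.liminf (fun k => ENNReal.ofReal (b k / (v k : ℝ))) atTop ≤ 2 := by
  classical
  set s := stmt2st a b with hs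
  set v : ℕ → ℕ := fun k => (s k).1 with hv
  -- main invariant
  have inv : ∀ k, 0 < v k ∧ ((s k).2 = true → (v k : ℝ) ≤ a k) ∧
      a k ≤ 2 * v k ∧ ((v k : ℝ) ≤ b k ∨ v k = 1) := by
    intro k
    induction k with
    | zero =>
      by_cases h : 1 ≤ a 0
      · have hsp : s 0 = (bdiv 1 (a 0), true) := by simp [hs, stmt2st, h]
        have hb := bdiv_spec (V := 1) (x := a 0) Nat.one_pos (by simpa using h)
        refine ⟨?_, ?_, ?_, ?_⟩
        · simp [hv, hsp]; exact bdiv_pos Nat.one_pos _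
        · intro _; simp [hv, hsp]; exact hb.1
        · simp [hv, hsp]; linarith [hb.2]
        · left; simp [hv, hsp]; exact le_trans hb.1 (hab 0)
      · have hsp : s 0 = (1, false) := by simp [hs, stmt2st, h]
        push_neg at h
        refine ⟨?_, ?_, ?_, ?_⟩
        · simp [hv, hsp]
        · intro hc; rw [hsp] at hc; simp at hc
        · simp [hv, hsp]; linarith
        · right; simp [hv, hsp]
    | succ k ih =>
      obtain ⟨hpos, hpha, h2v, hvb⟩ := ih
      by_cases hph : (s k).2 = true
      · -- b-update
        have hsp : s (k+1) = (bdiv (v k) (b (k+1)), false) := by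
          simp [hs, stmt2st]; rw [← hs]
          simp [hph, hv]
        have hVb : (v k : ℝ) ≤ b (k+1) :=
          le_trans (hpha hph) (le_trans (hab k) (hbmono (Nat.le_succ k)))
        have hb := bdiv_spec hpos hVb
        refine ⟨?_, ?_, ?_, ?_⟩
        · simp [hv, hsp]; exact bdiv_pos hpos _
        · intro hc; rw [hsp] at hc; simp at hc
        · simp only [hv, hsp]; exact le_trans (hab (k+1)) (le_of_lt hb.2)
        · left; simp only [hv, hsp]; exact hb.1
      · by_cases hle : (v k : ℝ) ≤ a (k+1)
        · -- a-update
          have hsp : s (k+1) = (bdiv (v k) (a (k+1)), true) := by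
            simp [hs, stmt2st]; rw [← hs]
            simp [hph, hv, hle]; exact hle
          have hb := bdiv_spec hpos hle
          refine ⟨?_, ?_, ?_, ?_⟩
          · simp [hv, hsp]; exact bdiv_pos hpos _
          · intro _; simp only [hv, hsp]; exact hb.1
          · simp only [hv, hsp]; linarith [hb.2]
          · left; simp only [hv, hsp]; exact le_trans hb.1 (hab (k+1))
        · -- keep
          have hsp : s (k+1) = ((s k).1, false) := by
            simp [hs, stmt2st]; rw [← hs]
            simp [hph, hv, hle]; exact not_le.mp hle
          push_neg at hle
          refine ⟨?_, ?_, ?_, ?_⟩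
          · simpa [hv, hsp] using hpos
          · intro hc; rw [hsp] at hc; simp at hc
          · simp only [hv, hsp]
            have : (0:ℝ) < v k := by exact_mod_cast hpos
            linarith
          · rcases hvb with h | h
            · left; simp only [hv, hsp]
              exact le_trans h (hbmono (Nat.le_succ k))
            · right; simpa [hv, hsp] using h
  have hpos : ∀ k, 0 < v k := fun k => (inv k).1
  -- divisibility
  have hdvd : ∀ k, v k ∣ v (k+1) := by
    intro k
    by_cases hph : (s k).2 = true
    · have hsp : s (k+1) = (bdiv (v k) (b (k+1)), false) := by
        simp [hs, stmt2st]; rw [← hs]; simp [hph, hv]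
      simp only [hv, hsp]; exact bdiv_dvd _ _
    · by_cases hle : (v k : ℝ) ≤ a (k+1)
      · have hsp : s (k+1) = (bdiv (v k) (a (k+1)), true) := by
          simp [hs, stmt2st]; rw [← hs]; simp [hph, hv, hle]; exact hle
        simp only [hv, hsp]; exact bdiv_dvd _ _
      · have hsp : s (k+1) = ((s k).1, false) := by
          simp [hs, stmt2st]; rw [← hs]; simp [hph, hv, hle]; exact not_le.mp hle
        simp [hv, hsp]
  -- infinitely many phase-true steps
  have hfreq : ∀ N, ∃ k, N ≤ k ∧ (s k).2 = true := by
    intro N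
    by_contra hc
    push_neg at hc
    have hkeep : ∀ k, N ≤ k → v (k+1) = v k ∧ a (k+1) < v k := by
      intro k hk
      have hph : (s k).2 = false := Bool.eq_false_iff.mpr (hc k hk)
      have hph' : (s (k+1)).2 = false := Bool.eq_false_iff.mpr (hc (k+1) (by omega))
      by_cases hle : (v k : ℝ) ≤ a (k+1)
      · exfalso
        have hsp : s (k+1) = (bdiv (v k) (a (k+1)), true) := by
          simp [hs, stmt2st]; rw [← hs]; simp [hph, hv, hle]; exact hle
        rw [hsp] at hph'; simp at hph'
      · have hsp : s (k+1) = ((s k).1, false) := by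
          simp [hs, stmt2st]; rw [← hs]; simp [hph, hv, hle]; exact not_le.mp hle
        push_neg at hle
        exact ⟨by simp [hv, hsp], hle⟩
    have hconst : ∀ k, N ≤ k → v k = v N := by
      intro k hk
      induction k with
      | zero =>
        have hN0 : N = 0 := by omega
        simp [hN0]
      | succ k ih =>
        rcases Nat.lt_or_ge N (k+1) with h | h
        · have hk' : N ≤ k := by omega
          rw [(hkeep k hk').1, ih hk']
        · have : N = k + 1 := by omega
          rw [this]
    obtain ⟨M, hM⟩ := (tendsto_atTop.1 haunb ((v N : ℝ))).exists_forall_of_atTop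
    set K := max M (N+1) with hK
    have h1 : (v N : ℝ) ≤ a K := hM K (le_max_left _ _)
    have h2 : a K < v N := by
      obtain ⟨m, hm⟩ : ∃ m, K = m + 1 := ⟨K - 1, by omega⟩
      have hmN : N ≤ m := by omega
      have := (hkeep m hmN).2
      rw [hm]
      calc a (m+1) < (v m : ℝ) := this
        _ = (v N : ℝ) := by exact_mod_cast hconst m hmN
    linarith
  -- conclusion
  refine ⟨v, hpos, hdvd, ?_, ?_, ?_, ?_⟩
  · -- 1 ≤ limsup a/v
    refine Filter.le_limsup_of_frequently_le ?_ (by isBoundedDefault)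
    rw [frequently_atTop]
    intro N
    obtain ⟨k, hk, hph⟩ := hfreq N
    refine ⟨k, hk, ?_⟩
    have h1 : (v k : ℝ) ≤ a k := (inv k).2.1 hph
    have hv0 : (0:ℝ) < v k := by exact_mod_cast hpos k
    have : (1:ℝ) ≤ a k / v k := (one_le_div hv0).2 h1
    exact ENNReal.one_le_ofReal.2 this
  · -- limsup a/v ≤ 2
    refine Filter.limsup_le_of_le (by isBoundedDefault) ?_
    · filter_upwards with k
      have hv0 : (0:ℝ) < v k := by exact_mod_cast hpos k
      have : a k / v k ≤ 2 := (div_le_iff₀ hv0).2 (by linarith [(inv k).2.2.1])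
      calc ENNReal.ofReal (a k / v k) ≤ ENNReal.ofReal 2 :=
            ENNReal.ofReal_le_ofReal this
        _ = 2 := by norm_num
  · -- 1 ≤ liminf b/v
    refine Filter.le_liminf_of_le (by isBoundedDefault) ?_
    obtain ⟨M, hM⟩ := (tendsto_atTop.1 hbunb 1).exists_forall_of_atTop
    rw [eventually_atTop]
    refine ⟨M, fun k hk => ?_⟩
    have hvb : (v k : ℝ) ≤ b k := by
      rcases (inv k).2.2.2 with h | h
      · exact h
      · rw [h]; exact_mod_cast (by simpa using hM k hk)
    have hv0 : (0:ℝ) < v k := by exact_mod_cast hpos k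
    exact ENNReal.one_le_ofReal.2 ((one_le_div hv0).2 hvb)
  · -- liminf b/v ≤ 2
    refine Filter.liminf_le_of_frequently_le ?_ (by isBoundedDefault)
    rw [frequently_atTop]
    intro N
    obtain ⟨k, hk, hph⟩ := hfreq N
    refine ⟨k + 1, by omega, ?_⟩
    have hsp : s (k+1) = (bdiv (v k) (b (k+1)), false) := by
      simp [hs, stmt2st]; rw [← hs]; simp [hph, hv]
    have hVb : (v k : ℝ) ≤ b (k+1) :=
      le_trans ((inv k).2.1 hph) (le_trans (hab k) (hbmono (Nat.le_succ k)))
    have hb := bdiv_spec (hpos k) hVb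
    have hvk : (v (k+1) : ℝ) = (bdiv (v k) (b (k+1)) : ℝ) := by
      simp [hv, hsp]
    have hv0 : (0:ℝ) < v (k+1) := by exact_mod_cast hpos (k+1)
    have : b (k+1) / v (k+1) ≤ 2 := by
      rw [div_le_iff₀ hv0, hvk]
      linarith [hb.2]
    calc ENNReal.ofReal (b (k+1) / v (k+1)) ≤ ENNReal.ofReal 2 :=
          ENNReal.ofReal_le_ofReal this
      _ = 2 := by norm_num
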